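/- Let L : C ∪ {p} → Fin (n+1) be a bijection, and partition C into C_L = {c : L(c) < L(p)} and C_R = {c : L(c) > L(p)}. Let π be a bijection (vote) with peak p (i.e., π(p) is maximal). Then π is coincident with L if and only if π restricted to C_L is order-reversing in distance from p and likewise on C_R; precisely, for all c, c' ∈ C_L (resp. c, c' ∈ C_R), L(c) > L(c') implies π(c) > π(c') on C_L (resp. L(c) < L(c') implies π(c) > π(c') on C_R). -/
import Mathlib


/-- A vote `π` is coincident with (single-peaked w.r.t.) a societal order `L`. -/
def Coincident {C : Type*} {n : ℕ} (L π : C ≃ Fin n) : Prop :=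
  ∀ a b c : C, ((L a < L b ∧ L b < L c) ∨ (L c < L b ∧ L b < L a)) →
    π b < π c → π a < π b

/-- For a vote with peak `p` (modelled as `none`), coincidence with `L` is
equivalent to preferences decreasing with distance from `p` on the left side
`C_L = {c : L c < L p}` and on the right side `C_R = {c : L c > L p}`. -/
theorem coincident_iff_two_sides {n : ℕ}
    (L π : Option (Fin n) ≃ Fin (n + 1))
    (hpeak : ∀ c : Option (Fin n), π c ≤ π none) :
    Coincident L π ↔
      ((∀ c c' : Fin n, L (some c) < L none → L (some c') < L none →
          L (some c') < L (some c) → π (some c') < π (some c)) ∧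
       (∀ c c' : Fin n, L none < L (some c) → L none < L (some c') →
          L (some c) < L (some c') → π (some c') < π (some c))) := by
  constructor
  · intro h
    have key : ∀ c : Fin n, π (some c) < π none := fun c =>
      lt_of_le_of_ne (hpeak _) (fun he => by simpa using π.injective he)
    constructor
    · intro c c' hc _ hlt
      exact h (some c') (some c) none (Or.inl ⟨hlt, hc⟩) (key c)
    · intro c c' hc _ hlt
      exact h (some c') (some c) none (Or.inr ⟨hc, hlt⟩) (key c)
  · rintro ⟨hL, hR⟩ a b c hord hbc
    have hbn : b ≠ none := by
      rintro rfl
      exact absurd hbc (not_lt.2 (hpeak c))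
    obtain ⟨b', rfl⟩ : ∃ b', b = some b' := Option.ne_none_iff_exists'.mp hbn
    rcases hord with ⟨hab, hbc'⟩ | ⟨hcb, hba⟩
    · rcases lt_trichotomy (L (some b')) (L none) with hb | hb | hb
      · obtain ⟨a', rfl⟩ : ∃ a', a = some a' := by
          rcases a with _ | a'
          · exact absurd (hab.trans hb) (lt_irrefl _)
          · exact ⟨a', rfl⟩
        exact hL b' a' hb (hab.trans hb) hab
      · exact absurd (L.injective hb) (by simp)
      · obtain ⟨c', rfl⟩ : ∃ c', c = some c' := by
          rcases c with _ | c'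
          · exact absurd (hb.trans hbc') (lt_irrefl _)
          · exact ⟨c', rfl⟩
        exact absurd hbc (not_lt.2 (hR b' c' hb (hb.trans hbc') hbc').le)
    · rcases lt_trichotomy (L (some b')) (L none) with hb | hb | hb
      · obtain ⟨c', rfl⟩ : ∃ c', c = some c' := by
          rcases c with _ | c'
          · exact absurd (hcb.trans hb) (lt_irrefl _)
          · exact ⟨c', rfl⟩
        exact absurd hbc (not_lt.2 (hL b' c' hb (hcb.trans hb) hcb).le)
      · exact absurd (L.injective hb) (by simp)
      · obtain ⟨a', rfl⟩ : ∃ a', a = some a' := by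
          rcases a with _ | a'
          · exact absurd (hb.trans hba) (lt_irrefl _)
          · exact ⟨a', rfl⟩
        exact hR b' a' hb (hb.trans hba) hba
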